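/- arXiv:1411.6503 — 5 statements merged into one kernel-verified Lean document; each statement's English description precedes it below -/
import Mathlib

section
/- Let w : ℂ → ℂ be analytic on the open unit disk, suppose w is real-valued on the real interval (−1,1) (that is, Im w(x) = 0 for every real x with |x| < 1), and let 0 < ε ≤ π. Then for every real x with |x| < 1 the value w_ε(x) = (1/(2ε)) ∫_{-ε}^{ε} w(x·e^{it}) dt is real, i.e., its imaginary part is zero. -/
open MeasureTheory

private theorem stmt1_reflDiff (w : ℂ → ℂ)
    (hw : DifferentiableOn ℂ w (Metric.ball (0 : ℂ) 1)) :
    DifferentiableOn ℂ (fun z => (starRingEnd ℂ) (w ((starRingEnd ℂ) z)))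
      (Metric.ball (0:ℂ) 1) := by
  intro z₀ hz₀
  have hz₀' : (starRingEnd ℂ) z₀ ∈ Metric.ball (0:ℂ) 1 := by
    simpa [Complex.norm_conj] using hz₀
  have hda : DifferentiableAt ℂ w ((starRingEnd ℂ) z₀) :=
    hw.differentiableAt (Metric.isOpen_ball.mem_nhds hz₀')
  set d := deriv w ((starRingEnd ℂ) z₀) with hdd
  have hd : HasDerivAt w d ((starRingEnd ℂ) z₀) := hda.hasDerivAt
  have h1 := (hasDerivAt_iff_isLittleO.mp hd).comp_tendsto
    ((Complex.continuous_conj.tendsto z₀))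
  have h1' : (fun z => w ((starRingEnd ℂ) z) - w ((starRingEnd ℂ) z₀) -
      d * ((starRingEnd ℂ) z - (starRingEnd ℂ) z₀))
      =o[nhds z₀] fun z => (starRingEnd ℂ) z - (starRingEnd ℂ) z₀ := by
    simpa [Function.comp_def, smul_eq_mul, mul_comm] using h1
  have h2 : (fun z => (starRingEnd ℂ) (w ((starRingEnd ℂ) z)) -
      (starRingEnd ℂ) (w ((starRingEnd ℂ) z₀)) - (starRingEnd ℂ) d * (z - z₀))
      =o[nhds z₀] fun z => z - z₀ := by
    refine Asymptotics.IsLittleO.of_norm_left (Asymptotics.IsLittleO.of_norm_right ?_)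
    calc (fun z => ‖(starRingEnd ℂ) (w ((starRingEnd ℂ) z)) -
      (starRingEnd ℂ) (w ((starRingEnd ℂ) z₀)) - (starRingEnd ℂ) d * (z - z₀)‖)
        = fun z => ‖w ((starRingEnd ℂ) z) - w ((starRingEnd ℂ) z₀) -
            d * ((starRingEnd ℂ) z - (starRingEnd ℂ) z₀)‖ := by
          funext z
          rw [← RCLike.norm_conj (w ((starRingEnd ℂ) z) - w ((starRingEnd ℂ) z₀) -
            d * ((starRingEnd ℂ) z - (starRingEnd ℂ) z₀))]
          simp [map_sub, map_mul]
      _ =o[nhds z₀] fun z => ‖z - z₀‖ := by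
          have heq : (fun z : ℂ => ‖z - z₀‖)
              = fun z => ‖(starRingEnd ℂ) z - (starRingEnd ℂ) z₀‖ := by
            funext z; rw [← map_sub, RCLike.norm_conj]
          rw [heq]
          exact h1'.norm_norm
  have : HasDerivAt (fun z => (starRingEnd ℂ) (w ((starRingEnd ℂ) z)))
      ((starRingEnd ℂ) d) z₀ := by
    rw [hasDerivAt_iff_isLittleO]
    simpa [smul_eq_mul, mul_comm] using h2
  exact this.differentiableAt.differentiableWithinAt

private theorem stmt1_reflEq (w : ℂ → ℂ)
    (hw : DifferentiableOn ℂ w (Metric.ball (0 : ℂ) 1))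
    (hreal : ∀ x : ℝ, |x| < 1 → (w (x : ℂ)).im = 0) :
    Set.EqOn w (fun z => (starRingEnd ℂ) (w ((starRingEnd ℂ) z))) (Metric.ball (0:ℂ) 1) := by
  have hg := stmt1_reflDiff w hw
  have haw : AnalyticOnNhd ℂ w (Metric.ball (0:ℂ) 1) :=
    hw.analyticOnNhd Metric.isOpen_ball
  have hag : AnalyticOnNhd ℂ (fun z => (starRingEnd ℂ) (w ((starRingEnd ℂ) z)))
      (Metric.ball (0:ℂ) 1) := hg.analyticOnNhd Metric.isOpen_ball
  refine haw.eqOn_of_preconnected_of_frequently_eq hag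
    ((convex_ball (0:ℂ) 1).isPreconnected) (Metric.mem_ball_self one_pos) ?_
  have hu : Filter.Tendsto (fun n : ℕ => ((1 / (n + 2) : ℝ) : ℂ)) Filter.atTop
      (nhdsWithin 0 {(0:ℂ)}ᶜ) := by
    apply tendsto_nhdsWithin_of_tendsto_nhds_of_eventually_within
    · have h0 : Filter.Tendsto (fun n : ℕ => (1 / (n + 2) : ℝ)) Filter.atTop (nhds 0) := by
        have h := (tendsto_one_div_add_atTop_nhds_zero_nat (𝕜 := ℝ)).comp
          (Filter.tendsto_add_atTop_nat 1)
        have : (fun n : ℕ => (1 / (n + 2) : ℝ))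
            = (fun n : ℕ => (1 / (n + 1) : ℝ)) ∘ (· + 1) := by
          funext n; simp [Function.comp]; ring_nf
        rw [this]
        exact h
      have := (Complex.continuous_ofReal.tendsto 0).comp h0
      simpa [Function.comp_def] using this
    · filter_upwards with n
      simp only [Set.mem_compl_iff, Set.mem_singleton_iff]
      intro h
      have : (1 / (n + 2) : ℝ) = 0 := by exact_mod_cast h
      have h2 : (0:ℝ) < 1 / (n + 2) := by positivity
      linarith
  refine hu.frequently (Filter.Frequently.of_forall fun n => ?_)
  have hlt : |(1 / (n + 2) : ℝ)| < 1 := by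
    rw [abs_of_pos (by positivity)]
    rw [div_lt_one (by positivity)]
    linarith [Nat.cast_nonneg (α := ℝ) n]
  have him := hreal _ hlt
  have : (starRingEnd ℂ) ((1 / (n + 2) : ℝ) : ℂ) = ((1 / (n + 2) : ℝ) : ℂ) :=
    Complex.conj_ofReal _
  rw [this]
  exact (Complex.conj_eq_iff_im.mpr him).symm

/-- If `w` is analytic on the open unit disk, real-valued on `(-1,1)`,
and `0 < ε ≤ π`, then for every real `x` with `|x| < 1` the filtered value
`w_ε(x) = (1/(2ε)) ∫_{-ε}^{ε} w(x·e^{it}) dt` has zero imaginary part. -/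
theorem stmt_1 (w : ℂ → ℂ) (hw : DifferentiableOn ℂ w (Metric.ball (0 : ℂ) 1))
    (hreal : ∀ x : ℝ, |x| < 1 → (w (x : ℂ)).im = 0)
    (ε : ℝ) (hε : 0 < ε) (hεπ : ε ≤ Real.pi) :
    ∀ x : ℝ, |x| < 1 →
      ((1 / (2 * (ε : ℂ))) *
        ∫ t in (-ε)..ε, w ((x : ℂ) * Complex.exp (Complex.I * (t : ℂ)))).im = 0 := by
  have hEq := stmt1_reflEq w hw hreal
  intro x hx
  set f : ℝ → ℂ := fun t => w ((x : ℂ) * Complex.exp (Complex.I * (t : ℂ))) with hf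
  have hmem : ∀ t : ℝ, (x : ℂ) * Complex.exp (Complex.I * (t : ℂ)) ∈ Metric.ball (0:ℂ) 1 := by
    intro t
    simp only [Metric.mem_ball, dist_zero_right, norm_mul]
    rw [Complex.norm_exp]
    simp [Complex.norm_real, hx]
  have hconj : ∀ t : ℝ, (starRingEnd ℂ) ((x : ℂ) * Complex.exp (Complex.I * (t : ℂ)))
      = (x : ℂ) * Complex.exp (Complex.I * ((-t : ℝ) : ℂ)) := by
    intro t
    rw [map_mul, Complex.conj_ofReal, ← Complex.exp_conj, map_mul, Complex.conj_I,
      Complex.conj_ofReal]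
    push_cast
    ring_nf
  have hsym : ∀ t : ℝ, f (-t) = (starRingEnd ℂ) (f t) := by
    intro t
    have hz := hEq (hmem t)
    simp only at hz
    calc f (-t) = w ((starRingEnd ℂ) ((x : ℂ) * Complex.exp (Complex.I * (t : ℂ)))) := by
          rw [hf]; simp only [hconj t, Complex.ofReal_neg]
      _ = (starRingEnd ℂ) (f t) := by rw [hf]; simp only; rw [hz, Complex.conj_conj]
  set J : ℂ := ∫ t in (-ε)..ε, f t with hJ
  have hle : (-ε) ≤ ε := by linarith
  have hcj : (starRingEnd ℂ) J = J := by
    rw [hJ, intervalIntegral.integral_of_le hle, ← integral_conj]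
    have : ∀ t : ℝ, (starRingEnd ℂ) (f t) = f (-t) := fun t => (hsym t).symm
    calc ∫ t in Set.Ioc (-ε) ε, (starRingEnd ℂ) (f t)
        = ∫ t in Set.Ioc (-ε) ε, f (-t) := by simp_rw [this]
      _ = ∫ t in (-ε)..ε, f (-t) := (intervalIntegral.integral_of_le hle).symm
      _ = ∫ t in (-ε)..ε, f t := by rw [intervalIntegral.integral_comp_neg]; rw [neg_neg]
      _ = ∫ t in Set.Ioc (-ε) ε, f t := intervalIntegral.integral_of_le hle
  have hJim : J.im = 0 := by
    have := congrArg Complex.im hcj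
    simp only [Complex.conj_im] at this
    linarith
  have hcoef : (1 / (2 * (ε : ℂ))) = ((1 / (2 * ε) : ℝ) : ℂ) := by push_cast; ring
  rw [hcoef]
  simp [Complex.mul_im, hJim]
end

section
/- Let w : ℂ → ℂ be analytic on the open unit disk with w(0) = 0, and define its logarithmic primitive W(z) = ∫_0^1 w(tz)/t dt for z in the open unit disk. Then for every z in the open unit disk and every ε with 0 < ε ≤ π, the filtered function satisfies (1/(2ε)) ∫_{-ε}^{ε} w(z·e^{it}) dt = (−i/(2ε)) · ( W(z·e^{iε}) − W(z·e^{−iε}) ). -/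
open MeasureTheory Metric Complex intervalIntegral

lemma aux_hasDerivAt_logPrim (g : ℂ → ℂ) (hg : DifferentiableOn ℂ g (Metric.ball (0:ℂ) 1))
    {z₀ : ℂ} (hz₀ : z₀ ∈ Metric.ball (0:ℂ) 1) :
    HasDerivAt (fun x => ∫ t in (0:ℝ)..1, x * g ((t:ℂ) * x)) (g z₀) z₀ := by
  have hga : AnalyticOnNhd ℂ g (Metric.ball (0:ℂ) 1) := hg.analyticOnNhd isOpen_ball
  have hg' : AnalyticOnNhd ℂ (deriv g) (Metric.ball (0:ℂ) 1) := hga.deriv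
  have hzn : ‖z₀‖ < 1 := by simpa using hz₀
  set r : ℝ := (‖z₀‖ + 1) / 2 with hr_def
  have hzr : ‖z₀‖ < r := by rw [hr_def]; linarith
  have hr1 : r < 1 := by rw [hr_def]; linarith
  have hr0 : 0 ≤ r := le_trans (norm_nonneg _) hzr.le
  set δ : ℝ := r - ‖z₀‖ with hδ_def
  have hδ : 0 < δ := by rw [hδ_def]; linarith
  have hsub : Metric.closedBall (0:ℂ) r ⊆ Metric.ball (0:ℂ) 1 :=
    (Metric.closedBall_subset_ball hr1)
  -- bounds
  obtain ⟨C, hC⟩ := (isCompact_closedBall (0:ℂ) r).exists_bound_of_continuousOn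
    (hga.continuousOn.mono hsub)
  obtain ⟨C', hC'⟩ := (isCompact_closedBall (0:ℂ) r).exists_bound_of_continuousOn
    (hg'.continuousOn.mono hsub)
  have hC0 : 0 ≤ C := le_trans (norm_nonneg _) (hC 0 (Metric.mem_closedBall_self hr0))
  have hC'0 : 0 ≤ C' := le_trans (norm_nonneg _) (hC' 0 (Metric.mem_closedBall_self hr0))
  -- membership helpers
  have hmem1 : ∀ (t : ℝ) (x : ℂ), t ∈ Set.Icc (0:ℝ) 1 → ‖x‖ < 1 →
      (t:ℂ) * x ∈ Metric.ball (0:ℂ) 1 := by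
    intro t x ht hx
    simp only [Metric.mem_ball, dist_zero_right, norm_mul, Complex.norm_real]
    calc ‖t‖ * ‖x‖ ≤ 1 * ‖x‖ := by
          apply mul_le_mul_of_nonneg_right _ (norm_nonneg x)
          rw [Real.norm_eq_abs, abs_le]; constructor <;> linarith [ht.1, ht.2]
      _ = ‖x‖ := one_mul _
      _ < 1 := hx
  have hmemr : ∀ (t : ℝ) (x : ℂ), t ∈ Set.Icc (0:ℝ) 1 → ‖x‖ ≤ r →
      (t:ℂ) * x ∈ Metric.closedBall (0:ℂ) r := by
    intro t x ht hx
    simp only [Metric.mem_closedBall, dist_zero_right, norm_mul, Complex.norm_real]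
    calc ‖t‖ * ‖x‖ ≤ 1 * ‖x‖ := by
          apply mul_le_mul_of_nonneg_right _ (norm_nonneg x)
          rw [Real.norm_eq_abs, abs_le]; constructor <;> linarith [ht.1, ht.2]
      _ = ‖x‖ := one_mul _
      _ ≤ r := hx
  -- the dominated derivative theorem
  set F' : ℂ → ℝ → ℂ := fun x t => g ((t:ℂ) * x) + (t:ℂ) * x * deriv g ((t:ℂ) * x) with hF'def
  have cont : ∀ x : ℂ, ‖x‖ < 1 → ContinuousOn (fun t : ℝ => x * g ((t:ℂ) * x)) (Set.Icc 0 1) := by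
    intro x hx
    apply ContinuousOn.mul continuousOn_const
    apply hga.continuousOn.comp (by fun_prop)
    intro t ht; exact hmem1 t x ht hx
  have contF' : ∀ x : ℂ, ‖x‖ < 1 → ContinuousOn (F' x) (Set.Icc 0 1) := by
    intro x hx
    have h1 : ContinuousOn (fun t : ℝ => (t:ℂ) * x) (Set.Icc 0 1) := by fun_prop
    have hmaps : Set.MapsTo (fun t : ℝ => (t:ℂ) * x) (Set.Icc 0 1) (Metric.ball (0:ℂ) 1) :=
      fun t ht => hmem1 t x ht hx
    exact ((hga.continuousOn.comp h1 hmaps).add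
      (h1.mul (hg'.continuousOn.comp h1 hmaps)))
  have key := intervalIntegral.hasDerivAt_integral_of_dominated_loc_of_deriv_le
    (F := fun x => fun t : ℝ => x * g ((t:ℂ) * x)) (F' := F') (x₀ := z₀)
    (a := 0) (b := 1) (bound := fun _ => C + C') (μ := MeasureTheory.volume) (Metric.ball_mem_nhds z₀ hδ)
    ?_ ?_ ?_ ?_ ?_ ?_
  · -- conclude
    rcases key with ⟨hint, hd⟩
    have : (∫ t in (0:ℝ)..1, F' z₀ t) = g z₀ := by
      have hψ : ∀ t ∈ Set.uIcc (0:ℝ) 1,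
          HasDerivAt (fun s : ℝ => (s:ℂ) * g ((s:ℂ) * z₀)) (F' z₀ t) t := by
        intro t ht
        rw [Set.uIcc_of_le (zero_le_one' ℝ)] at ht
        have hmem : (t:ℂ) * z₀ ∈ Metric.ball (0:ℂ) 1 := hmem1 t z₀ ht hzn
        have hin : HasDerivAt (fun ζ : ℂ => ζ * z₀) z₀ (t:ℂ) := by
          simpa using (hasDerivAt_id ((t:ℂ))).mul_const z₀
        have hout : HasDerivAt g (deriv g ((t:ℂ) * z₀)) ((t:ℂ) * z₀) :=
          (hg.differentiableAt (isOpen_ball.mem_nhds hmem)).hasDerivAt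
        have hcomp := (hout.comp ((t:ℂ)) hin)
        have hmul := (hasDerivAt_id ((t:ℂ))).mul hcomp
        have := hmul.comp_ofReal
        convert this using 1
        show F' z₀ t = 1 * ((fun ζ : ℂ => g (ζ * z₀)) ((t:ℂ))) + (t:ℂ) * (deriv g ((t:ℂ)*z₀) * z₀)
        simp [hF'def]; ring
        rfl
      have hci : ContinuousOn (F' z₀) (Set.uIcc (0:ℝ) 1) := by
        rw [Set.uIcc_of_le (zero_le_one' ℝ)]; exact contF' z₀ hzn
      have := intervalIntegral.integral_eq_sub_of_hasDerivAt hψ hci.intervalIntegrable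
      rw [this]; simp
    rwa [this] at hd
  · -- hF_meas
    filter_upwards [isOpen_ball.mem_nhds hz₀] with x hx
    have : ‖x‖ < 1 := by simpa using hx
    exact (((cont x this).mono (by rw [Set.uIoc_of_le (zero_le_one' ℝ)]; exact Set.Ioc_subset_Icc_self)).aestronglyMeasurable measurableSet_uIoc)
  · -- hF_int
    have hci : ContinuousOn (fun t : ℝ => z₀ * g ((t:ℂ) * z₀)) (Set.uIcc (0:ℝ) 1) := by
      rw [Set.uIcc_of_le (zero_le_one' ℝ)]; exact cont z₀ hzn
    exact hci.intervalIntegrable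
  · -- hF'_meas
    exact (((contF' z₀ hzn).mono (by rw [Set.uIoc_of_le (zero_le_one' ℝ)]; exact Set.Ioc_subset_Icc_self)).aestronglyMeasurable measurableSet_uIoc)
  · -- h_bound
    apply Filter.Eventually.of_forall
    intro t ht x hx
    rw [Set.uIoc_of_le (zero_le_one' ℝ)] at ht
    have htI : t ∈ Set.Icc (0:ℝ) 1 := Set.Ioc_subset_Icc_self ht
    have hxr : ‖x‖ < r := by
      have h1 : ‖x - z₀‖ < δ := mem_ball_iff_norm.mp hx
      have h2 : ‖x‖ - ‖z₀‖ ≤ ‖x - z₀‖ := norm_sub_norm_le x z₀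
      rw [hδ_def] at h1; linarith
    have hmem : (t:ℂ) * x ∈ Metric.closedBall (0:ℂ) r := hmemr t x htI hxr.le
    have h1 : ‖g ((t:ℂ) * x)‖ ≤ C := hC _ hmem
    have h2 : ‖deriv g ((t:ℂ) * x)‖ ≤ C' := hC' _ hmem
    have h3 : ‖(t:ℂ) * x‖ ≤ 1 := by
      have := Metric.mem_closedBall.mp hmem
      rw [dist_zero_right] at this
      linarith
    calc ‖F' x t‖ ≤ ‖g ((t:ℂ) * x)‖ + ‖(t:ℂ) * x * deriv g ((t:ℂ) * x)‖ := norm_add_le _ _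
      _ ≤ C + 1 * C' := by
          gcongr
          rw [norm_mul]
          exact mul_le_mul h3 h2 (norm_nonneg _) zero_le_one
      _ = C + C' := by ring
  · exact intervalIntegrable_const
  · -- h_diff
    apply Filter.Eventually.of_forall
    intro t ht x hx
    rw [Set.uIoc_of_le (zero_le_one' ℝ)] at ht
    have htI : t ∈ Set.Icc (0:ℝ) 1 := Set.Ioc_subset_Icc_self ht
    have hxr : ‖x‖ < r := by
      have h1 : ‖x - z₀‖ < δ := mem_ball_iff_norm.mp hx
      have h2 : ‖x‖ - ‖z₀‖ ≤ ‖x - z₀‖ := norm_sub_norm_le x z₀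
      rw [hδ_def] at h1; linarith
    have hmem : (t:ℂ) * x ∈ Metric.ball (0:ℂ) 1 := hmem1 t x htI (hxr.trans hr1)
    have hin : HasDerivAt (fun y : ℂ => (t:ℂ) * y) ((t:ℂ)) x := by
      simpa using (hasDerivAt_id x).const_mul ((t:ℂ))
    have hout : HasDerivAt g (deriv g ((t:ℂ) * x)) ((t:ℂ) * x) :=
      (hg.differentiableAt (isOpen_ball.mem_nhds hmem)).hasDerivAt
    have hcomp := hout.comp x hin
    have hmul := (hasDerivAt_id x).mul hcomp
    convert hmul using 1
    show F' x t = 1 * ((fun y : ℂ => g ((t:ℂ) * y)) x) + x * (deriv g ((t:ℂ)*x) * (t:ℂ))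
    simp [hF'def]; ring
    all_goals rfl

/-- For `w` analytic on the open unit disk with `w(0) = 0`, with
logarithmic primitive `W(z) = ∫_0^1 w(tz)/t dt`, the filtered function satisfies
`(1/(2ε)) ∫_{-ε}^{ε} w(z·e^{it}) dt = (−i/(2ε))·(W(z·e^{iε}) − W(z·e^{−iε}))`
for every `z` in the open unit disk and every `0 < ε ≤ π`. -/
theorem stmt_2 (w : ℂ → ℂ) (hw : DifferentiableOn ℂ w (Metric.ball (0 : ℂ) 1))
    (h0 : w 0 = 0)
    (W : ℂ → ℂ)
    (hW : ∀ z ∈ Metric.ball (0 : ℂ) 1, W z = ∫ t in (0:ℝ)..1, w ((t : ℂ) * z) / (t : ℂ))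
    (ε : ℝ) (hε : 0 < ε) (hεπ : ε ≤ Real.pi) :
    ∀ z ∈ Metric.ball (0 : ℂ) 1,
      (1 / (2 * (ε : ℂ))) * ∫ t in (-ε)..ε, w (z * Complex.exp (Complex.I * (t : ℂ)))
        = (-Complex.I / (2 * (ε : ℂ))) *
            (W (z * Complex.exp (Complex.I * (ε : ℂ)))
              - W (z * Complex.exp (-Complex.I * (ε : ℂ)))) := by
  intro z hz
  set g : ℂ → ℂ := dslope w 0 with hg_def
  have hg : DifferentiableOn ℂ g (Metric.ball (0:ℂ) 1) :=
    (Complex.differentiableOn_dslope (Metric.ball_mem_nhds (0:ℂ) one_pos)).mpr hw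
  have hwg : ∀ ζ : ℂ, w ζ = ζ * g ζ := by
    intro ζ
    rcases eq_or_ne ζ 0 with rfl | hζ
    · simp [h0]
    · rw [hg_def, dslope_of_ne _ hζ, slope_def_field]
      field_simp [h0]
      rw [h0, sub_zero, sub_zero, mul_comm]
  -- W has derivative g on the ball
  have hWd : ∀ ζ ∈ Metric.ball (0:ℂ) 1, HasDerivAt W (g ζ) ζ := by
    intro ζ hζ
    have heq : W =ᶠ[nhds ζ] fun x => ∫ t in (0:ℝ)..1, x * g ((t:ℂ) * x) := by
      filter_upwards [isOpen_ball.mem_nhds hζ] with x hx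
      rw [hW x hx]
      rw [intervalIntegral.integral_of_le (zero_le_one' ℝ),
        intervalIntegral.integral_of_le (zero_le_one' ℝ)]
      apply MeasureTheory.setIntegral_congr_fun measurableSet_Ioc
      intro t ht
      have ht0 : (t:ℂ) ≠ 0 := by exact_mod_cast ne_of_gt ht.1
      show w ((t:ℂ) * x) / (t:ℂ) = x * g ((t:ℂ) * x)
      rw [hwg ((t:ℂ) * x)]
      field_simp
    exact (aux_hasDerivAt_logPrim g hg hζ).congr_of_eventuallyEq heq
  -- the path derivative
  have hzn : ‖z‖ < 1 := by simpa using hz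
  have hmem : ∀ t : ℝ, z * Complex.exp (Complex.I * (t:ℂ)) ∈ Metric.ball (0:ℂ) 1 := by
    intro t
    simp only [Metric.mem_ball, dist_zero_right, norm_mul,
      Complex.norm_exp]
    have : (Complex.I * (t:ℂ)).re = 0 := by simp
    rw [this, Real.exp_zero, mul_one]
    exact hzn
  have hφ : ∀ t ∈ Set.uIcc (-ε) ε,
      HasDerivAt (fun s : ℝ => W (z * Complex.exp (Complex.I * (s:ℂ))))
        (Complex.I * w (z * Complex.exp (Complex.I * (t:ℂ)))) t := by
    intro t _
    have hin : HasDerivAt (fun ζ : ℂ => z * Complex.exp (Complex.I * ζ))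
        (z * (Complex.exp (Complex.I * (t:ℂ)) * Complex.I)) ((t:ℂ)) := by
      have h1 : HasDerivAt (fun ζ : ℂ => Complex.I * ζ) Complex.I ((t:ℂ)) := by
        simpa using (hasDerivAt_id ((t:ℂ))).const_mul Complex.I
      have h2 := (Complex.hasDerivAt_exp (Complex.I * (t:ℂ))).comp ((t:ℂ)) h1
      simpa [mul_comm] using h2.const_mul z
    have hout := hWd _ (hmem t)
    have hcomp := (hout.comp ((t:ℂ)) hin).comp_ofReal
    convert hcomp using 1
    · rfl
    rw [hwg (z * Complex.exp (Complex.I * (t:ℂ)))]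
    ring
  have hcont : ContinuousOn
      (fun t : ℝ => Complex.I * w (z * Complex.exp (Complex.I * (t:ℂ)))) (Set.uIcc (-ε) ε) := by
    apply ContinuousOn.mul continuousOn_const
    apply hw.continuousOn.comp (by fun_prop)
    intro t _; exact hmem t
  have key := intervalIntegral.integral_eq_sub_of_hasDerivAt hφ hcont.intervalIntegrable
  rw [intervalIntegral.integral_const_mul] at key
  have hexp : Complex.I * ((-ε : ℝ) : ℂ) = -Complex.I * (ε : ℂ) := by push_cast; ring
  rw [hexp] at key
  set S := ∫ t in (-ε)..ε, w (z * Complex.exp (Complex.I * (t : ℂ))) with hS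
  linear_combination (-Complex.I / (2 * (ε:ℂ))) * key + (S / (2 * (ε:ℂ))) * Complex.I_sq
end

section
/- Let ε > 0, let a ≤ b be real numbers, and let f : ℝ → ℝ be differentiable on ℝ with derivative f′ monotone nondecreasing on [a−ε, b+ε]. Then the filtered function F(θ) = (1/(2ε)) ∫_{θ−ε}^{θ+ε} f(θ′) dθ′ is twice differentiable at every θ ∈ [a, b], with second derivative F″(θ) = ( f′(θ+ε) − f′(θ−ε) ) / (2ε) ≥ 0; in particular the sign of the second derivative (the direction of concavity) is invariant under the action of the filter. -/
open MeasureTheory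

/-- Let `ε > 0`, `a ≤ b`, and let `f` be differentiable on `ℝ` with
derivative `f′` monotone nondecreasing on `[a−ε, b+ε]`.  Then the moving average
`F(θ) = (1/(2ε)) ∫_{θ−ε}^{θ+ε} f` is twice differentiable at every `θ ∈ [a, b]`, with
second derivative `F″(θ) = (f′(θ+ε) − f′(θ−ε)) / (2ε) ≥ 0`. -/
theorem stmt_9 (ε : ℝ) (hε : 0 < ε) (a b : ℝ) (hab : a ≤ b) (f f' : ℝ → ℝ)
    (hderiv : ∀ x : ℝ, HasDerivAt f (f' x) x)
    (hmono : MonotoneOn f' (Set.Icc (a - ε) (b + ε))) :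
    ∀ θ ∈ Set.Icc a b,
      HasDerivAt (deriv (fun s : ℝ => (1 / (2 * ε)) * ∫ t in (s - ε)..(s + ε), f t))
        ((f' (θ + ε) - f' (θ - ε)) / (2 * ε)) θ
      ∧ 0 ≤ (f' (θ + ε) - f' (θ - ε)) / (2 * ε) := by
  have hfd : Differentiable ℝ f := fun x => (hderiv x).differentiableAt
  have hfc : Continuous f := hfd.continuous
  set g : ℝ → ℝ := fun x => ∫ t in (0:ℝ)..x, f t with hg
  have hgd : ∀ x : ℝ, HasDerivAt g (f x) x := fun x =>
    intervalIntegral.integral_hasDerivAt_right (hfc.intervalIntegrable _ _)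
      (hfc.stronglyMeasurableAtFilter volume _) hfc.continuousAt
  have hrepr : (fun s : ℝ => (1 / (2 * ε)) * ∫ t in (s - ε)..(s + ε), f t)
      = fun s : ℝ => (1 / (2 * ε)) * (g (s + ε) - g (s - ε)) := by
    funext s
    have := intervalIntegral.integral_interval_sub_left
      (μ := volume) (a := (0:ℝ)) (b := s + ε) (c := s - ε)
      (hfc.intervalIntegrable _ _) (hfc.intervalIntegrable _ _)
    rw [hg]
    simp only [← this]
  have hF : ∀ s : ℝ, HasDerivAt
      (fun s : ℝ => (1 / (2 * ε)) * ∫ t in (s - ε)..(s + ε), f t)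
      ((1 / (2 * ε)) * (f (s + ε) - f (s - ε))) s := by
    intro s
    rw [hrepr]
    have h1 : HasDerivAt (fun s : ℝ => g (s + ε)) (f (s + ε)) s := by
      simpa [Function.comp_def] using (hgd (s + ε)).comp s ((hasDerivAt_id s).add_const ε)
    have h2 : HasDerivAt (fun s : ℝ => g (s - ε)) (f (s - ε)) s := by
      simpa [Function.comp_def] using (hgd (s - ε)).comp s ((hasDerivAt_id s).sub_const ε)
    exact (h1.sub h2).const_mul _
  have hDeq : deriv (fun s : ℝ => (1 / (2 * ε)) * ∫ t in (s - ε)..(s + ε), f t)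
      = fun s : ℝ => (1 / (2 * ε)) * (f (s + ε) - f (s - ε)) :=
    funext fun s => (hF s).deriv
  intro θ hθ
  constructor
  · rw [hDeq]
    have h1 : HasDerivAt (fun s : ℝ => f (s + ε)) (f' (θ + ε)) θ := by
      simpa [Function.comp_def] using (hderiv (θ + ε)).comp θ ((hasDerivAt_id θ).add_const ε)
    have h2 : HasDerivAt (fun s : ℝ => f (s - ε)) (f' (θ - ε)) θ := by
      simpa [Function.comp_def] using (hderiv (θ - ε)).comp θ ((hasDerivAt_id θ).sub_const ε)
    have := (h1.sub h2).const_mul (1 / (2 * ε))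
    rw [show (f' (θ + ε) - f' (θ - ε)) / (2 * ε) = 1 / (2 * ε) * (f' (θ + ε) - f' (θ - ε)) by ring]
    exact this
  · have hm : θ - ε ∈ Set.Icc (a - ε) (b + ε) :=
      ⟨by linarith [hθ.1], by linarith [hθ.2]⟩
    have hp : θ + ε ∈ Set.Icc (a - ε) (b + ε) :=
      ⟨by linarith [hθ.1], by linarith [hθ.2]⟩
    have := hmono hm hp (by linarith)
    exact div_nonneg (by linarith) (by linarith)
end

section
/- Let 0 < ε < π. Then: (i) for every integer k ≥ 1 the infinite product ∏_{n=1}^∞ sinc(kε/2^n) converges to a real number c_k(ε); (ii) for every integer m ≥ 0 the series Σ_{k=1}^∞ k^m |c_k(ε)| converges (the coefficients decay faster than any power of k); and (iii) the infinite-order scaled kernel K̄_ε(θ) = 1/(2π) + (1/π) Σ_{k=1}^∞ c_k(ε) cos(kθ) defines an infinitely differentiable (C^∞) function of θ ∈ ℝ. -/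
/-- The sinc function: `sinc x = sin x / x` for `x ≠ 0` and `sinc 0 = 1`. -/
noncomputable def sinc (x : ℝ) : ℝ := if x = 0 then 1 else Real.sin x / x

/-- The Fourier coefficient `c_k(ε) = ∏_{n=1}^∞ sinc(kε/2^n)` of the
infinite-order scaled kernel. -/
noncomputable def infKernelCoeff (ε : ℝ) (k : ℕ) : ℝ :=
  ∏' n : ℕ, sinc ((k : ℝ) * ε / 2 ^ (n + 1))

/-- The infinite-order scaled kernel with range `ε`:
`K̄_ε(θ) = 1/(2π) + (1/π) Σ_{k=1}^∞ c_k(ε) cos(kθ)`. -/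
noncomputable def infKernel (ε : ℝ) (θ : ℝ) : ℝ :=
  1 / (2 * Real.pi) +
    (1 / Real.pi) * ∑' k : ℕ, infKernelCoeff ε (k + 1) * Real.cos ((k + 1 : ℝ) * θ)

open Finset Filter

lemma abs_sinc_le_one (x : ℝ) : |sinc x| ≤ 1 := by
  unfold sinc
  split_ifs with h
  · simp
  · rw [abs_div, div_le_one (abs_pos.2 h)]
    exact Real.abs_sin_le_abs

lemma abs_sinc_le_inv {x : ℝ} (hx : x ≠ 0) : |sinc x| ≤ 1 / |x| := by
  unfold sinc
  rw [if_neg hx, abs_div]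
  gcongr
  exact abs_le.2 ⟨Real.neg_one_le_sin x, Real.sin_le_one x⟩

lemma sinc_lower {x : ℝ} (h0 : 0 < x) (h1 : x ≤ 1) : 1 - x ^ 2 / 4 < sinc x := by
  unfold sinc
  rw [if_neg h0.ne', lt_div_iff₀ h0]
  have := Real.sin_gt_sub_cube h0
  nlinarith

lemma multipliable_sinc_aux {a : ℝ} (ha : 0 < a) :
    Multipliable (fun n : ℕ => sinc (a / 2 ^ (n + 1))) := by
  obtain ⟨M, hM⟩ := pow_unbounded_of_one_lt a (one_lt_two (α := ℝ))
  apply Multipliable.comp_nat_add (k := M)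
  set g : ℕ → ℝ := fun n => sinc (a / 2 ^ (n + M + 1)) with hg
  have hx : ∀ n : ℕ, 0 < a / 2 ^ (n + M + 1) ∧ a / 2 ^ (n + M + 1) ≤ 1 / 2 := by
    intro n
    constructor
    · positivity
    · rw [div_le_div_iff₀ (by positivity) (by norm_num), one_mul]
      calc a * 2 ≤ 2 ^ M * 2 := by nlinarith
        _ = 2 ^ (M + 1) := by ring
        _ ≤ 2 ^ (n + M + 1) := by
            apply pow_le_pow_right₀ one_le_two; omega
  have hgl : ∀ n : ℕ, 1 / 2 ≤ g n ∧ g n ≤ 1 := by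
    intro n
    obtain ⟨h0, h1⟩ := hx n
    have := sinc_lower h0 (h1.trans (by norm_num))
    constructor
    · nlinarith
    · have := abs_sinc_le_one (a / 2 ^ (n + M + 1))
      rw [abs_le] at this; exact this.2
  have hgpos : ∀ n : ℕ, 0 < g n := fun n => lt_of_lt_of_le (by norm_num) (hgl n).1
  have hlog : Summable fun n => Real.log (g n) := by
    apply Summable.of_norm
    have hb : Summable fun n : ℕ => a ^ 2 * (1 / 4 : ℝ) ^ n :=
      (summable_geometric_of_lt_one (by norm_num) (by norm_num)).mul_left _
    apply Summable.of_nonneg_of_le (fun n => norm_nonneg _) _ hb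
    intro n
    obtain ⟨hl, hu⟩ := hgl n
    have hpos := hgpos n
    have hlog_le : -Real.log (g n) ≤ 2 * (1 - g n) := by
      have h1 : Real.log (1 / g n) ≤ 1 / g n - 1 := Real.log_le_sub_one_of_pos (by positivity)
      rw [one_div, Real.log_inv] at h1
      have hinv : g n * (g n)⁻¹ = 1 := mul_inv_cancel₀ hpos.ne'
      nlinarith [h1, hinv, hpos,
        mul_nonneg (by linarith : (0:ℝ) ≤ g n - 1/2) (by linarith : (0:ℝ) ≤ 1 - g n)]
    have hlogle : ‖Real.log (g n)‖ ≤ 2 * (1 - g n) := by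
      rw [Real.norm_eq_abs, abs_of_nonpos (Real.log_nonpos (by linarith) hu)]
      exact hlog_le
    refine hlogle.trans ?_
    obtain ⟨h0, h1⟩ := hx n
    have hs := sinc_lower h0 (h1.trans (by norm_num))
    have hxx : (a / 2 ^ (n + M + 1)) ^ 2 ≤ a ^ 2 * (1 / 4) ^ n := by
      rw [div_pow, ← pow_mul]
      have h44 : (4 : ℝ) ^ n ≤ 2 ^ ((n + M + 1) * 2) := by
        calc (4 : ℝ) ^ n = 2 ^ (2 * n) := by rw [pow_mul]; norm_num
          _ ≤ 2 ^ ((n + M + 1) * 2) := by apply pow_le_pow_right₀ one_le_two; omega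
      calc a ^ 2 / 2 ^ ((n + M + 1) * 2) ≤ a ^ 2 / 4 ^ n := by
            apply div_le_div_of_nonneg_left (by positivity) (by positivity) h44
        _ = a ^ 2 * (1 / 4) ^ n := by rw [div_pow]; ring_nf
    have : 1 - g n ≤ (a / 2 ^ (n + M + 1)) ^ 2 / 4 := by
      simp only [hg]; nlinarith
    nlinarith [pow_nonneg (le_of_lt (by norm_num : (0:ℝ) < 1/4)) n]
  have := Real.multipliable_of_summable_log hgpos hlog
  apply this.congr
  intro n
  simp only [hg]

lemma coeff_abs_le_prod {a : ℝ} (ha : 0 < a) (N : ℕ) :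
    |∏' n : ℕ, sinc (a / 2 ^ (n + 1))| ≤ ∏ n ∈ Finset.range N, |sinc (a / 2 ^ (n + 1))| := by
  have hm := multipliable_sinc_aux ha
  have h1 : |∏' n : ℕ, sinc (a / 2 ^ (n + 1))| = ∏' n : ℕ, |sinc (a / 2 ^ (n + 1))| := by
    have := Multipliable.norm_tprod hm
    simpa [Real.norm_eq_abs] using this
  rw [h1]
  have hmn : Multipliable fun n : ℕ => |sinc (a / 2 ^ (n + 1))| := by
    have := hm.norm
    simpa [Real.norm_eq_abs] using this
  refine le_of_tendsto hmn.hasProd ?_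
  filter_upwards [Filter.eventually_ge_atTop (Finset.range N)] with s hs
  rw [← Finset.prod_sdiff hs]
  have h2 : ∏ i ∈ s \ Finset.range N, |sinc (a / 2 ^ (i + 1))| ≤ 1 :=
    Finset.prod_le_one (fun i _ => abs_nonneg _) (fun i _ => abs_sinc_le_one _)
  calc (∏ i ∈ s \ Finset.range N, |sinc (a / 2 ^ (i + 1))|) *
        ∏ i ∈ Finset.range N, |sinc (a / 2 ^ (i + 1))|
      ≤ 1 * ∏ i ∈ Finset.range N, |sinc (a / 2 ^ (i + 1))| := by
        apply mul_le_mul_of_nonneg_right h2 (Finset.prod_nonneg fun i _ => abs_nonneg _)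
    _ = _ := one_mul _

lemma summable_coeff {ε : ℝ} (hε : 0 < ε) (m : ℕ) :
    Summable (fun k : ℕ => ((k : ℝ) + 1) ^ m * |infKernelCoeff ε (k + 1)|) := by
  set D : ℝ := ∏ n ∈ Finset.range (m + 2), (2 : ℝ) ^ (n + 1) with hD
  have hDpos : 0 < D := Finset.prod_pos (fun n _ => by positivity)
  have hbound : ∀ k : ℕ, ((k : ℝ) + 1) ^ m * |infKernelCoeff ε (k + 1)| ≤
      (D / ε ^ (m + 2)) * (1 / ((k : ℝ) + 1) ^ 2) := by
    intro k
    set x : ℝ := (k : ℝ) + 1 with hx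
    have hxpos : (0 : ℝ) < x := by positivity
    have ha : (0 : ℝ) < x * ε := by positivity
    have hc : infKernelCoeff ε (k + 1) = ∏' n : ℕ, sinc (x * ε / 2 ^ (n + 1)) := by
      simp only [infKernelCoeff, Nat.cast_add, Nat.cast_one, hx]
    have h1 := coeff_abs_le_prod ha (m + 2)
    have h2 : ∏ n ∈ Finset.range (m + 2), |sinc (x * ε / 2 ^ (n + 1))| ≤
        ∏ n ∈ Finset.range (m + 2), ((2 : ℝ) ^ (n + 1) * (1 / (x * ε))) := by
      apply Finset.prod_le_prod (fun i _ => abs_nonneg _)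
      intro i _
      have hne : x * ε / 2 ^ (i + 1) ≠ 0 := by positivity
      refine (abs_sinc_le_inv hne).trans ?_
      rw [abs_of_pos (by positivity), one_div_div, div_eq_mul_one_div]
    have h3 : ∏ n ∈ Finset.range (m + 2), ((2 : ℝ) ^ (n + 1) * (1 / (x * ε))) =
        D * (1 / (x * ε)) ^ (m + 2) := by
      rw [Finset.prod_mul_distrib, Finset.prod_const, Finset.card_range, hD]
    have key : x ^ m * (D * (1 / (x * ε)) ^ (m + 2)) = (D / ε ^ (m + 2)) * (1 / x ^ 2) := by
      have hx0 : x ≠ 0 := hxpos.ne'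
      have he0 : ε ≠ 0 := hε.ne'
      rw [one_div_pow, mul_pow, pow_add x]
      field_simp
    calc x ^ m * |infKernelCoeff ε (k + 1)|
        ≤ x ^ m * (D * (1 / (x * ε)) ^ (m + 2)) := by
          apply mul_le_mul_of_nonneg_left _ (by positivity)
          rw [hc]
          exact h1.trans (h2.trans_eq h3)
      _ = (D / ε ^ (m + 2)) * (1 / x ^ 2) := key
  apply Summable.of_nonneg_of_le (fun k => by positivity) hbound
  apply Summable.mul_left
  have h2 : Summable fun n : ℕ => 1 / (n : ℝ) ^ 2 :=
    Real.summable_one_div_nat_pow.mpr (by norm_num)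
  have h := (summable_nat_add_iff 1).mpr h2
  apply h.congr
  intro k
  push_cast
  ring

lemma iteratedDeriv_cos_mul (co a : ℝ) (n : ℕ) :
    iteratedDeriv n (fun θ : ℝ => co * Real.cos (a * θ)) =
      fun x : ℝ => co * a ^ n * Real.cos (a * x + n * (Real.pi / 2)) := by
  induction n with
  | zero => funext x; simp
  | succ n ih =>
    rw [iteratedDeriv_succ, ih]
    funext x
    have h1 : HasDerivAt (fun x : ℝ => a * x + (n : ℝ) * (Real.pi / 2)) a x := by
      simpa using ((hasDerivAt_id x).const_mul a).add_const ((n : ℝ) * (Real.pi / 2))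
    have h2 : HasDerivAt (fun x : ℝ => co * a ^ n * Real.cos (a * x + (n : ℝ) * (Real.pi / 2)))
        (co * a ^ n * (-Real.sin (a * x + (n : ℝ) * (Real.pi / 2)) * a)) x :=
      ((Real.hasDerivAt_cos _).comp x h1).const_mul _
    rw [h2.deriv]
    have h4 : Real.cos (a * x + ((n : ℝ) + 1) * (Real.pi / 2)) =
        -Real.sin (a * x + (n : ℝ) * (Real.pi / 2)) := by
      have h5 : a * x + ((n : ℝ) + 1) * (Real.pi / 2) =
          (a * x + (n : ℝ) * (Real.pi / 2)) + Real.pi / 2 := by ring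
      rw [h5, Real.cos_add_pi_div_two]
    push_cast
    rw [h4]
    ring

lemma contDiff_infKernel {ε : ℝ} (hε : 0 < ε) : ContDiff ℝ (⊤ : ℕ∞) (infKernel ε) := by
  have hS : ContDiff ℝ (⊤ : ℕ∞)
      (fun θ : ℝ => ∑' k : ℕ, infKernelCoeff ε (k + 1) * Real.cos (((k : ℝ) + 1) * θ)) := by
    apply contDiff_tsum
      (f := fun (i : ℕ) (θ : ℝ) => infKernelCoeff ε (i + 1) * Real.cos (((i : ℝ) + 1) * θ))
      (v := fun (k i : ℕ) => ((i : ℝ) + 1) ^ k * |infKernelCoeff ε (i + 1)|)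
    · intro i
      exact contDiff_const.mul (Real.contDiff_cos.comp (contDiff_const.mul contDiff_id))
    · intro k _
      exact summable_coeff hε k
    · intro k i x _
      rw [norm_iteratedFDeriv_eq_norm_iteratedDeriv, iteratedDeriv_cos_mul, Real.norm_eq_abs]
      have hpos : (0 : ℝ) ≤ (i : ℝ) + 1 := by positivity
      rw [abs_mul, abs_mul, abs_pow, abs_of_nonneg hpos]
      have hcos := Real.abs_cos_le_one ((( i : ℝ) + 1) * x + (k : ℝ) * (Real.pi / 2))
      have h1 : (0 : ℝ) ≤ ((i : ℝ) + 1) ^ k := by positivity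
      calc |infKernelCoeff ε (i + 1)| * ((i : ℝ) + 1) ^ k *
            |Real.cos (((i : ℝ) + 1) * x + (k : ℝ) * (Real.pi / 2))|
          ≤ |infKernelCoeff ε (i + 1)| * ((i : ℝ) + 1) ^ k * 1 :=
            mul_le_mul_of_nonneg_left hcos (mul_nonneg (abs_nonneg _) h1)
        _ = ((i : ℝ) + 1) ^ k * |infKernelCoeff ε (i + 1)| := by ring
  have heq : infKernel ε = fun θ : ℝ => 1 / (2 * Real.pi) +
      (1 / Real.pi) * ∑' k : ℕ, infKernelCoeff ε (k + 1) * Real.cos (((k : ℝ) + 1) * θ) := rfl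
  rw [heq]
  exact contDiff_const.add (contDiff_const.mul hS)

/-- For `0 < ε < π`: (i) the infinite products defining the coefficients
`c_k(ε)` converge; (ii) for every `m ≥ 0` the series `Σ_k k^m |c_k(ε)|` converges;
(iii) the infinite-order scaled kernel `K̄_ε` is a `C^∞` function of `θ`. -/
theorem stmt_10 (ε : ℝ) (hε : 0 < ε) (hεπ : ε < Real.pi) :
    (∀ k : ℕ, 1 ≤ k → Multipliable (fun n : ℕ => sinc ((k : ℝ) * ε / 2 ^ (n + 1))))
    ∧ (∀ m : ℕ, Summable (fun k : ℕ => ((k + 1 : ℝ)) ^ m * |infKernelCoeff ε (k + 1)|))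
    ∧ ContDiff ℝ (⊤ : ℕ∞) (infKernel ε) := by
  refine ⟨?_, ?_, ?_⟩
  · intro k hk
    have hkpos : (0 : ℝ) < (k : ℝ) * ε := by
      have : (0 : ℝ) < (k : ℝ) := by exact_mod_cast Nat.pos_of_ne_zero (by omega)
      positivity
    exact multipliable_sinc_aux hkpos
  · intro m
    exact summable_coeff hε m
  · exact contDiff_infKernel hε
end

section
/- Let 0 < ε < π and let K̄_ε be the infinite-order scaled kernel. Then 0 ≤ K̄_ε(θ) ≤ 1/ε for every real θ. -/
namespace Stmt13
open Finset
open Real hiding sinc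
open Filter Topology intervalIntegral

lemma abs_sinc_le_one (x : ℝ) : |sinc x| ≤ 1 := by
  unfold sinc
  split_ifs with h
  · norm_num
  · rw [abs_div, div_le_one (abs_pos.mpr h)]
    exact Real.abs_sin_le_abs

lemma abs_sinc_le_inv (x : ℝ) (hx : x ≠ 0) : |sinc x| ≤ 1 / |x| := by
  unfold sinc
  rw [if_neg hx, abs_div]
  have h1 : (0:ℝ) < |x| := abs_pos.mpr hx
  rw [div_le_div_iff₀ h1 h1]
  have := Real.abs_sin_le_one x
  nlinarith

lemma sinc_pos (x : ℝ) (h0 : 0 < x) (h1 : x ≤ 1) : 0 < sinc x := by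
  unfold sinc
  rw [if_neg h0.ne']
  exact div_pos (Real.sin_pos_of_pos_of_lt_pi h0 (lt_of_le_of_lt h1 (by
    have := Real.pi_gt_three; linarith))) h0

lemma sinc_le_one (x : ℝ) : sinc x ≤ 1 :=
  le_trans (le_abs_self _) (abs_sinc_le_one x)

lemma one_sub_le_sinc (x : ℝ) (h0 : 0 < x) (h1 : x ≤ 1) : 1 - x ^ 2 / 4 ≤ sinc x := by
  unfold sinc
  rw [if_neg h0.ne', le_div_iff₀ h0]
  nlinarith [Real.sin_gt_sub_cube h0]

/-- integral of cosine over symmetric interval gives sinc -/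
lemma integral_cos_sinc (k : ℕ) (a θ : ℝ) (ha : a ≠ 0) :
    ∫ t in (θ - a)..(θ + a), Real.cos ((k + 1 : ℝ) * t)
      = 2 * a * (sinc ((k + 1 : ℝ) * a) * Real.cos ((k + 1 : ℝ) * θ)) := by
  have hk : ((k:ℝ) + 1) ≠ 0 := by positivity
  rw [intervalIntegral.integral_comp_mul_left Real.cos hk, integral_cos, smul_eq_mul]
  have h1 : ((k:ℝ)+1) * (θ + a) = ((k:ℝ)+1)*θ + ((k:ℝ)+1)*a := by ring
  have h2 : ((k:ℝ)+1) * (θ - a) = ((k:ℝ)+1)*θ - ((k:ℝ)+1)*a := by ring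
  rw [h1, h2, Real.sin_add, Real.sin_sub]
  unfold sinc
  rw [if_neg (mul_ne_zero hk ha)]
  field_simp
  ring

/-- trig polynomial with constant term 1/(2π) -/
noncomputable def P (b : ℕ → ℝ) (M : ℕ) (t : ℝ) : ℝ :=
  1/(2*Real.pi) + (1/Real.pi) * ∑ j ∈ range M, b j * Real.cos ((j+1:ℝ)*t)

lemma continuous_P (b : ℕ → ℝ) (M : ℕ) : Continuous (P b M) := by
  unfold P; fun_prop

lemma smooth (b : ℕ → ℝ) (M : ℕ) (θ a : ℝ) (ha : a ≠ 0) :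
    ∫ t in (θ-a)..(θ+a), P b M t
      = 2*a * P (fun j => b j * sinc ((j+1:ℝ)*a)) M θ := by
  unfold P
  have hc : Continuous fun t : ℝ => 1/Real.pi * ∑ j ∈ range M, b j * Real.cos ((j+1:ℝ)*t) := by
    fun_prop
  have hint : ∀ j ∈ range M, IntervalIntegrable (fun t => b j * Real.cos ((j+1:ℝ)*t))
      MeasureTheory.volume (θ-a) (θ+a) := by
    intro j _
    have : Continuous fun t : ℝ => b j * Real.cos ((j+1:ℝ)*t) := by fun_prop
    exact this.intervalIntegrable _ _
  rw [intervalIntegral.integral_add intervalIntegrable_const (hc.intervalIntegrable _ _),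
    intervalIntegral.integral_const, intervalIntegral.integral_const_mul,
    intervalIntegral.integral_finset_sum hint]
  have : ∀ j ∈ range M, (∫ t in (θ-a)..(θ+a), b j * Real.cos ((j+1:ℝ)*t))
      = 2*a*(b j * sinc ((j+1:ℝ)*a) * Real.cos ((j+1:ℝ)*θ)) := by
    intro j _
    rw [intervalIntegral.integral_const_mul, integral_cos_sinc j a θ ha]
    ring
  rw [Finset.sum_congr rfl this, ← Finset.mul_sum]
  have h2 : θ + a - (θ - a) = 2*a := by ring
  rw [h2, smul_eq_mul]
  ring

lemma fejer_identity (M : ℕ) (θ : ℝ) :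
    (M:ℝ) + 2 * ∑ j ∈ range M, ((M:ℝ) - (j+1)) * Real.cos ((j+1:ℝ)*θ)
      = (∑ j ∈ range M, Real.cos ((j:ℝ)*θ))^2 + (∑ j ∈ range M, Real.sin ((j:ℝ)*θ))^2 := by
  induction M with
  | zero => simp
  | succ M ih =>
    have reflect : ∑ j ∈ range M, Real.cos (((M:ℝ) - j)*θ)
        = ∑ j ∈ range M, Real.cos ((j+1:ℝ)*θ) := by
      rw [← Finset.sum_range_reflect (fun j => Real.cos ((j+1:ℝ)*θ)) M]
      refine Finset.sum_congr rfl fun j hj => ?_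
      have hj' := Finset.mem_range.mp hj
      congr 1
      have : (M - 1 - j : ℕ) = M - (j+1) := by omega
      rw [this, Nat.cast_sub (by omega)]
      push_cast
      ring
    have f5 : (∑ j ∈ range M, Real.cos ((j:ℝ)*θ)) * Real.cos ((M:ℝ)*θ)
        + (∑ j ∈ range M, Real.sin ((j:ℝ)*θ)) * Real.sin ((M:ℝ)*θ)
        = ∑ j ∈ range M, Real.cos ((j+1:ℝ)*θ) := by
      rw [Finset.sum_mul, Finset.sum_mul, ← Finset.sum_add_distrib, ← reflect]
      refine Finset.sum_congr rfl fun j hj => ?_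
      rw [show ((M:ℝ) - j)*θ = (M:ℝ)*θ - (j:ℝ)*θ by ring, Real.cos_sub]
      ring
    have f1 : ∑ j ∈ range (M+1), (((M+1:ℕ):ℝ) - (j+1)) * Real.cos ((j+1:ℝ)*θ)
        = (∑ j ∈ range M, ((M:ℝ) - (j+1)) * Real.cos ((j+1:ℝ)*θ))
          + ∑ j ∈ range M, Real.cos ((j+1:ℝ)*θ) := by
      rw [Finset.sum_range_succ, ← Finset.sum_add_distrib]
      push_cast
      rw [show ((M:ℝ) + 1 - ((M:ℝ)+1)) = 0 by ring]
      simp only [zero_mul, add_zero]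
      exact Finset.sum_congr rfl fun j hj => by ring
    have f2 : ∑ j ∈ range (M+1), Real.cos ((j:ℝ)*θ)
        = (∑ j ∈ range M, Real.cos ((j:ℝ)*θ)) + Real.cos ((M:ℝ)*θ) :=
      Finset.sum_range_succ _ _
    have f3 : ∑ j ∈ range (M+1), Real.sin ((j:ℝ)*θ)
        = (∑ j ∈ range M, Real.sin ((j:ℝ)*θ)) + Real.sin ((M:ℝ)*θ) :=
      Finset.sum_range_succ _ _
    have f6 := Real.sin_sq_add_cos_sq ((M:ℝ)*θ)
    rw [f1, f2, f3]
    push_cast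
    push_cast at ih
    nlinarith [ih, f5, f6]

lemma fejer_nonneg (M : ℕ) (θ : ℝ) :
    0 ≤ P (fun j => ((M:ℝ) - (j+1))/M) M θ := by
  rcases Nat.eq_zero_or_pos M with hM | hM
  · subst hM
    unfold P
    simp
    positivity
  · have hM' : (0:ℝ) < M := by exact_mod_cast hM
    have key : 2*Real.pi*M * P (fun j => ((M:ℝ) - (j+1))/M) M θ
        = (M:ℝ) + 2 * ∑ j ∈ range M, ((M:ℝ) - (j+1)) * Real.cos ((j+1:ℝ)*θ) := by
      unfold P
      have e2 : ∀ j ∈ range M, 2*(M:ℝ)*(((M:ℝ)-(j+1))/M * Real.cos ((j+1:ℝ)*θ))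
          = 2*(((M:ℝ)-(j+1)) * Real.cos ((j+1:ℝ)*θ)) := by
        intro j _
        field_simp
      rw [mul_add, Finset.mul_sum]
      have hπ := Real.pi_ne_zero
      have e3 : 2*Real.pi*(M:ℝ) * (1/(2*Real.pi)) = M := by field_simp
      rw [e3, Finset.mul_sum]
      rw [Finset.sum_congr rfl (fun j hj => by
        rw [← e2 j hj]; field_simp :
        ∀ j ∈ range M, 2*Real.pi*(M:ℝ) * (1/Real.pi * (((M:ℝ)-(j+1))/M * Real.cos ((j+1:ℝ)*θ)))
          = 2*(((M:ℝ)-(j+1)) * Real.cos ((j+1:ℝ)*θ))), ← Finset.mul_sum]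
    have h := fejer_identity M θ
    have h2 : 0 ≤ 2*Real.pi*M * P (fun j => ((M:ℝ) - (j+1))/M) M θ := by
      rw [key, h]
      positivity
    have h3 : (0:ℝ) < 2*Real.pi*M := by positivity
    nlinarith [h2, h3, mul_pos h3 (show (0:ℝ) < 1 by norm_num)]
noncomputable def pc (ε : ℝ) (N k : ℕ) : ℝ := ∏ n ∈ range N, sinc ((k:ℝ)*ε/2^(n+1))

noncomputable def w (M j : ℕ) : ℝ := ((M:ℝ) - (j+1))/M

noncomputable def Sn (ε : ℝ) (M N : ℕ) : ℝ → ℝ := P (fun j => w M j * pc ε N (j+1)) M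

lemma P_congr (b b' : ℕ → ℝ) (M : ℕ) (h : ∀ j ∈ range M, b j = b' j) (t : ℝ) :
    P b M t = P b' M t := by
  unfold P
  rw [Finset.sum_congr rfl fun j hj => by rw [h j hj]]

lemma Sn_zero (ε : ℝ) (M : ℕ) (θ : ℝ) : Sn ε M 0 θ = P (fun j => w M j) M θ := by
  unfold Sn pc
  exact P_congr _ _ M (fun j _ => by simp) θ

lemma Sn_rec (ε : ℝ) (hε : ε ≠ 0) (M N : ℕ) (θ : ℝ) :
    ∫ t in (θ - ε/2^(N+1))..(θ + ε/2^(N+1)), Sn ε M N t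
      = 2*(ε/2^(N+1)) * Sn ε M (N+1) θ := by
  unfold Sn
  rw [smooth _ M θ (ε/2^(N+1)) (by positivity)]
  congr 1
  refine P_congr _ _ M (fun j _ => ?_) θ
  unfold pc
  rw [Finset.prod_range_succ, mul_assoc]
  congr 2
  push_cast
  ring

lemma Sn_nonneg (ε : ℝ) (hε : 0 < ε) (M N : ℕ) (θ : ℝ) : 0 ≤ Sn ε M N θ := by
  induction N generalizing θ with
  | zero => rw [Sn_zero]; exact fejer_nonneg M θ
  | succ N ih =>
    have ha : (0:ℝ) < ε/2^(N+1) := by positivity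
    have hrec := Sn_rec ε hε.ne' M N θ
    have hi : 0 ≤ ∫ t in (θ - ε/2^(N+1))..(θ + ε/2^(N+1)), Sn ε M N t :=
      intervalIntegral.integral_nonneg (by linarith) (fun t _ => ih t)
    nlinarith [hi, hrec]

lemma P_periodic (b : ℕ → ℝ) (M : ℕ) : Function.Periodic (P b M) (2*Real.pi) := by
  intro t
  unfold P
  congr 1
  congr 1
  refine Finset.sum_congr rfl fun j _ => ?_
  congr 1
  rw [mul_add]
  have : ((j:ℝ)+1) * (2*Real.pi) = ((j+1:ℕ):ℝ) * (2*Real.pi) := by push_cast; ring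
  rw [this, Real.cos_add_nat_mul_two_pi]

lemma P_integral_one (b : ℕ → ℝ) (M : ℕ) :
    ∫ t in (-Real.pi)..Real.pi, P b M t = 1 := by
  have h := smooth b M 0 Real.pi Real.pi_ne_zero
  rw [zero_sub, zero_add] at h
  rw [h]
  have hz : ∀ j ∈ range M, b j * sinc ((j+1:ℝ)*Real.pi) = (fun _ : ℕ => (0:ℝ)) j := by
    intro j _
    have harg : ((j:ℝ)+1)*Real.pi ≠ 0 := by positivity
    have : sinc (((j:ℕ)+1:ℝ)*Real.pi) = 0 := by
      unfold sinc
      rw [if_neg harg]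
      have : Real.sin (((j:ℝ)+1)*Real.pi) = 0 := by
        have : ((j:ℝ)+1)*Real.pi = ((j+1:ℕ):ℝ)*Real.pi := by push_cast; ring
        rw [this, Real.sin_nat_mul_pi]
      rw [this, zero_div]
    rw [this, mul_zero]
  rw [P_congr _ _ M hz 0]
  unfold P
  simp
  field_simp

lemma Sn_le (ε : ℝ) (hε : 0 < ε) (hεπ : ε < Real.pi) (M : ℕ) :
    ∀ N, 1 ≤ N → ∀ θ, Sn ε M N θ ≤ 1/ε := by
  intro N hN
  induction N, hN using Nat.le_induction with
  | base =>
    intro θ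
    have hrec := Sn_rec ε hε.ne' M 0 θ
    have h2 : (2:ℝ)*(ε/2^(0+1)) = ε := by rw [pow_one]; ring
    rw [h2] at hrec
    -- ∫ over [θ-ε/2, θ+ε/2] of Sn 0 ≤ 1
    have hcont : ∀ u v : ℝ, IntervalIntegrable (Sn ε M 0) MeasureTheory.volume u v :=
      fun u v => (continuous_P _ M).intervalIntegrable u v
    have hnn : ∀ t, 0 ≤ Sn ε M 0 t := Sn_nonneg ε hε M 0
    have hper : Function.Periodic (Sn ε M 0) (2*Real.pi) := P_periodic _ M
    have hhalf : ε/2^(0+1) = ε/2 := by norm_num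
    rw [hhalf] at hrec
    have hsplit : ∫ t in (θ - Real.pi)..(θ + Real.pi), Sn ε M 0 t
        = (∫ t in (θ - Real.pi)..(θ - ε/2), Sn ε M 0 t)
          + ((∫ t in (θ - ε/2)..(θ + ε/2), Sn ε M 0 t)
            + ∫ t in (θ + ε/2)..(θ + Real.pi), Sn ε M 0 t) := by
      rw [intervalIntegral.integral_add_adjacent_intervals (hcont _ _) (hcont _ _),
        intervalIntegral.integral_add_adjacent_intervals (hcont _ _) (hcont _ _)]
    have hpereq : ∫ t in (θ - Real.pi)..(θ + Real.pi), Sn ε M 0 t = 1 := by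
      have := hper.intervalIntegral_add_eq (θ - Real.pi) (-Real.pi)
      rw [show θ - Real.pi + 2*Real.pi = θ + Real.pi by ring,
        show -Real.pi + 2*Real.pi = Real.pi by ring] at this
      rw [this]
      exact P_integral_one _ M
    have hb1 : 0 ≤ ∫ t in (θ - Real.pi)..(θ - ε/2), Sn ε M 0 t :=
      intervalIntegral.integral_nonneg (by linarith) (fun t _ => hnn t)
    have hb2 : 0 ≤ ∫ t in (θ + ε/2)..(θ + Real.pi), Sn ε M 0 t :=
      intervalIntegral.integral_nonneg (by linarith) (fun t _ => hnn t)
    have : ∫ t in (θ - ε/2)..(θ + ε/2), Sn ε M 0 t ≤ 1 := by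
      rw [hsplit] at hpereq
      linarith
    rw [hrec] at this
    rw [show (0:ℕ)+1 = 1 from rfl] at this
    rw [le_div_iff₀ hε]
    linarith [this]
  | succ N hN ih =>
    intro θ
    have ha : (0:ℝ) < ε/2^(N+1) := by positivity
    have hrec := Sn_rec ε hε.ne' M N θ
    have hmono : ∫ t in (θ - ε/2^(N+1))..(θ + ε/2^(N+1)), Sn ε M N t
        ≤ ∫ t in (θ - ε/2^(N+1))..(θ + ε/2^(N+1)), (1/ε : ℝ) := by
      apply intervalIntegral.integral_mono_on (by linarith)
        ((continuous_P _ M).intervalIntegrable _ _) intervalIntegrable_const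
      exact fun t _ => ih t
    rw [intervalIntegral.integral_const, smul_eq_mul] at hmono
    rw [hrec] at hmono
    have harea : (θ + ε/2^(N+1) - (θ - ε/2^(N+1))) = 2*(ε/2^(N+1)) := by ring
    rw [harea] at hmono
    have h2a : (0:ℝ) < 2*(ε/2^(N+1)) := by positivity
    exact (mul_le_mul_iff_right₀ h2a).mp hmono
lemma coeff_hasProd (ε : ℝ) (hε : 0 < ε) (k : ℕ) (hk : 1 ≤ k) :
    Multipliable (fun n : ℕ => sinc ((k:ℝ)*ε/2^(n+1))) := by
  set x : ℝ := (k:ℝ)*ε with hx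
  have hx0 : 0 < x := by
    have : (0:ℝ) < (k:ℝ) := by exact_mod_cast hk
    positivity
  obtain ⟨N₀, hN₀⟩ := exists_nat_gt x
  have harg : ∀ n : ℕ, 0 < x/2^(n+N₀+1) ∧ x/2^(n+N₀+1) ≤ 1 := by
    intro n
    constructor
    · positivity
    · rw [div_le_one (by positivity)]
      calc x ≤ N₀ := hN₀.le
      _ ≤ ((n+N₀ : ℕ) : ℝ) := by exact_mod_cast Nat.le_add_left _ _
      _ ≤ 2^(n+N₀) := by
          exact_mod_cast (Nat.lt_two_pow_self (n := n+N₀)).le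
      _ ≤ 2^(n+N₀+1) := by
          apply pow_le_pow_right₀ (by norm_num) (Nat.le_succ _)
  have hgpos : ∀ n : ℕ, 0 < sinc (x/2^(n+N₀+1)) :=
    fun n => sinc_pos _ (harg n).1 (harg n).2
  have hlog : Summable (fun n : ℕ => Real.log (sinc (x/2^(n+N₀+1)))) := by
    apply Summable.of_abs
    apply Summable.of_nonneg_of_le (fun n => abs_nonneg _)
      (show ∀ n : ℕ, |Real.log (sinc (x/2^(n+N₀+1)))| ≤ x^2 * (1/4)^n from ?_)
    · exact (summable_geometric_of_lt_one (by norm_num) (by norm_num)).mul_left _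
    · intro n
      set y := x/2^(n+N₀+1) with hy
      have hy0 : 0 < y := (harg n).1
      have hy1 : y ≤ 1 := (harg n).2
      set t := sinc y with ht
      have ht0 : 0 < t := hgpos n
      have ht1 : t ≤ 1 := sinc_le_one y
      have htl : 1 - y^2/4 ≤ t := one_sub_le_sinc y hy0 hy1
      have ht34 : 3/4 ≤ t := by nlinarith
      have hlogle : Real.log t ≤ 0 := Real.log_nonpos ht0.le ht1
      rw [abs_of_nonpos hlogle]
      have h1 : -Real.log t = Real.log t⁻¹ := (Real.log_inv t).symm
      have h2 : Real.log t⁻¹ ≤ t⁻¹ - 1 := Real.log_le_sub_one_of_pos (by positivity)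
      have h3 : t⁻¹ - 1 = (1-t)/t := by field_simp
      have h4 : (1-t)/t ≤ (y^2/4)/(3/4) := by
        apply div_le_div₀ (by positivity) (by nlinarith) (by norm_num) ht34
      have h5 : (y^2/4)/(3/4) ≤ y^2 := by nlinarith [sq_nonneg y]
      have h6 : y^2 ≤ x^2 * (1/4)^n := by
        have hy' : y ≤ x/2^n := by
          rw [hy]
          gcongr
          · norm_num
          · omega
        have hsq : y^2 ≤ (x/2^n)^2 := pow_le_pow_left₀ hy0.le hy' 2
        have h24 : ((2:ℝ)^n)^2 = 4^n := by
          rw [← pow_mul, show (4:ℝ) = 2^2 by norm_num, ← pow_mul, mul_comm]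
        calc y^2 ≤ (x/2^n)^2 := hsq
        _ = x^2 * (1/4)^n := by
            rw [div_pow, h24, div_eq_mul_one_div, one_div_pow]
      linarith
  have hmult : Multipliable (fun n : ℕ => sinc (x/2^(n+N₀+1))) := by
    exact Real.multipliable_of_summable_log hgpos hlog
  have hshift : HasProd (fun n : ℕ => sinc (x/2^(n+1)))
      ((∏ n ∈ range N₀, sinc (x/2^(n+1))) * ∏' n : ℕ, sinc (x/2^(n+N₀+1))) := by
    apply HasProd.prod_range_mul
    have : (fun n : ℕ => sinc (x/2^(n+N₀+1))) = fun n : ℕ => sinc (x/2^((n+N₀)+1)) := by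
      funext n; ring_nf
    rw [← this] at hmult ⊢
    exact hmult.hasProd
  exact ⟨_, hshift⟩

lemma pc_tendsto (ε : ℝ) (hε : 0 < ε) (k : ℕ) (hk : 1 ≤ k) :
    Tendsto (fun N => pc ε N k) atTop (𝓝 (infKernelCoeff ε k)) :=
  (coeff_hasProd ε hε k hk).hasProd.tendsto_prod_nat

lemma abs_pc_le (ε : ℝ) (hε : 0 < ε) (k : ℕ) (hk : 1 ≤ k) (N : ℕ) (hN : 2 ≤ N) :
    |pc ε N k| ≤ 8/((k:ℝ)*ε)^2 := by
  have hx0 : 0 < (k:ℝ)*ε := by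
    have : (0:ℝ) < (k:ℝ) := by exact_mod_cast hk
    positivity
  unfold pc
  rw [Finset.abs_prod]
  rw [← Finset.prod_range_mul_prod_Ico _ hN]
  have htail : ∏ n ∈ Finset.Ico 2 N, |sinc ((k:ℝ)*ε/2^(n+1))| ≤ 1 :=
    Finset.prod_le_one (fun n _ => abs_nonneg _) (fun n _ => abs_sinc_le_one _)
  have hhead : ∏ n ∈ range 2, |sinc ((k:ℝ)*ε/2^(n+1))| ≤ 8/((k:ℝ)*ε)^2 := by
    rw [Finset.prod_range_succ, Finset.prod_range_one]
    have h0 : |sinc ((k:ℝ)*ε/2^(0+1))| ≤ 2/((k:ℝ)*ε) := by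
      have := abs_sinc_le_inv ((k:ℝ)*ε/2^(0+1)) (by positivity)
      rw [abs_of_pos (by positivity : (0:ℝ) < (k:ℝ)*ε/2^(0+1))] at this
      calc |sinc ((k:ℝ)*ε/2^(0+1))| ≤ 1/((k:ℝ)*ε/2^(0+1)) := this
      _ = 2/((k:ℝ)*ε) := by
          rw [pow_one]
          field_simp
    have h1 : |sinc ((k:ℝ)*ε/2^(1+1))| ≤ 4/((k:ℝ)*ε) := by
      have := abs_sinc_le_inv ((k:ℝ)*ε/2^(1+1)) (by positivity)
      rw [abs_of_pos (by positivity : (0:ℝ) < (k:ℝ)*ε/2^(1+1))] at this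
      calc |sinc ((k:ℝ)*ε/2^(1+1))| ≤ 1/((k:ℝ)*ε/2^(1+1)) := this
      _ = 4/((k:ℝ)*ε) := by
          norm_num
    calc |sinc ((k:ℝ)*ε/2^(0+1))| * |sinc ((k:ℝ)*ε/2^(1+1))|
        ≤ (2/((k:ℝ)*ε)) * (4/((k:ℝ)*ε)) :=
          mul_le_mul h0 h1 (abs_nonneg _) (by positivity)
    _ = 8/((k:ℝ)*ε)^2 := by field_simp; ring
  calc (∏ n ∈ range 2, |sinc ((k:ℝ)*ε/2^(n+1))|) * ∏ n ∈ Finset.Ico 2 N, |sinc ((k:ℝ)*ε/2^(n+1))|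
      ≤ (8/((k:ℝ)*ε)^2) * 1 :=
        mul_le_mul hhead htail (Finset.prod_nonneg fun n _ => abs_nonneg _) (by positivity)
  _ = 8/((k:ℝ)*ε)^2 := mul_one _

lemma abs_coeff_le (ε : ℝ) (hε : 0 < ε) (k : ℕ) (hk : 1 ≤ k) :
    |infKernelCoeff ε k| ≤ 8/((k:ℝ)*ε)^2 := by
  have ht : Tendsto (fun N => |pc ε N k|) atTop (𝓝 |infKernelCoeff ε k|) :=
    (pc_tendsto ε hε k hk).abs
  apply le_of_tendsto ht
  filter_upwards [eventually_ge_atTop 2] with N hN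
  exact abs_pc_le ε hε k hk N hN

lemma coeff_summable (ε : ℝ) (hε : 0 < ε) :
    Summable (fun j : ℕ => |infKernelCoeff ε (j+1)|) := by
  apply Summable.of_nonneg_of_le (fun j => abs_nonneg _)
    (show ∀ j : ℕ, |infKernelCoeff ε (j+1)| ≤ (8/ε^2) * (1/((j+1):ℝ)^2) from ?_)
  · apply Summable.mul_left
    exact_mod_cast (summable_nat_add_iff 1).mpr (Real.summable_one_div_nat_pow.mpr one_lt_two)
  · intro j
    calc |infKernelCoeff ε (j+1)| ≤ 8/(((j+1:ℕ):ℝ)*ε)^2 :=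
        abs_coeff_le ε hε (j+1) (Nat.le_add_left 1 j)
    _ = (8/ε^2) * (1/((j+1):ℝ)^2) := by
        push_cast
        rw [mul_pow]
        field_simp
noncomputable def SM (ε : ℝ) (M : ℕ) (θ : ℝ) : ℝ :=
  1/(2*Real.pi) + (1/Real.pi) * ∑ j ∈ range M,
    w M j * infKernelCoeff ε (j+1) * Real.cos ((j+1:ℝ)*θ)

lemma SM_bounds (ε : ℝ) (hε : 0 < ε) (hεπ : ε < Real.pi) (M : ℕ) (θ : ℝ) :
    0 ≤ SM ε M θ ∧ SM ε M θ ≤ 1/ε := by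
  have htend : Tendsto (fun N => Sn ε M N θ) atTop (𝓝 (SM ε M θ)) := by
    unfold Sn P SM
    apply Tendsto.const_add
    apply Tendsto.const_mul
    apply tendsto_finset_sum
    intro j _
    exact ((pc_tendsto ε hε (j+1) (by omega)).const_mul (w M j)).mul_const _
  constructor
  · exact ge_of_tendsto htend (Eventually.of_forall fun N => Sn_nonneg ε hε M N θ)
  · apply le_of_tendsto htend
    filter_upwards [eventually_ge_atTop 1] with N hN
    exact Sn_le ε hε hεπ M N hN θ

lemma kernel_tendsto (ε : ℝ) (hε : 0 < ε) (θ : ℝ) :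
    Tendsto (fun M => SM ε M θ) atTop (𝓝 (infKernel ε θ)) := by
  set g : ℕ → ℕ → ℝ := fun M j =>
    (if j < M then w M j else 0) * (infKernelCoeff ε (j+1) * Real.cos ((j+1:ℝ)*θ)) with hg
  have h1 : ∀ M, SM ε M θ = 1/(2*Real.pi) + (1/Real.pi) * ∑' j, g M j := by
    intro M
    unfold SM
    congr 2
    rw [tsum_eq_sum (s := range M) (fun j hj => by
      rw [hg]
      simp only [if_neg (fun h => hj (Finset.mem_range.mpr h)), zero_mul])]
    refine Finset.sum_congr rfl fun j hj => ?_
    rw [hg]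
    simp only [if_pos (Finset.mem_range.mp hj)]
    ring
  have hpoint : ∀ j : ℕ, Tendsto (fun M => g M j) atTop
      (𝓝 (infKernelCoeff ε (j+1) * Real.cos ((j+1:ℝ)*θ))) := by
    intro j
    have hw : Tendsto (fun M : ℕ => (if j < M then w M j else 0)) atTop (𝓝 1) := by
      have hbase : Tendsto (fun M : ℕ => 1 - ((j:ℝ)+1)/M) atTop (𝓝 1) := by
        have := tendsto_const_div_atTop_nhds_zero_nat ((j:ℝ)+1)
        have h2 := (tendsto_const_nhds (x := (1:ℝ)) (f := atTop)).sub this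
        rw [sub_zero] at h2
        exact h2
      apply hbase.congr'
      filter_upwards [eventually_gt_atTop j] with M hM
      have hM0 : (M:ℝ) ≠ 0 := by
        have : 0 < M := by omega
        positivity
      rw [if_pos hM]
      unfold w
      field_simp
    have := hw.mul_const (infKernelCoeff ε (j+1) * Real.cos ((j+1:ℝ)*θ))
    rwa [one_mul] at this
  have hbound : ∀ᶠ (M : ℕ) in atTop, ∀ j : ℕ, ‖g M j‖ ≤ |infKernelCoeff ε (j+1)| := by
    apply Eventually.of_forall
    intro M j
    rw [hg]
    simp only [Real.norm_eq_abs, abs_mul]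
    have hw01 : |if j < M then w M j else 0| ≤ 1 := by
      split_ifs with h
      · unfold w
        rw [abs_div]
        have hM0 : (0:ℝ) < M := by
          have : 0 < M := by omega
          exact_mod_cast this
        rw [abs_of_pos hM0, div_le_one hM0, abs_of_nonneg (by
          have : (j:ℝ)+1 ≤ M := by exact_mod_cast h
          linarith)]
        have : (0:ℝ) ≤ (j:ℝ)+1 := by positivity
        linarith
      · simp
    calc |if j < M then w M j else 0| * (|infKernelCoeff ε (j+1)| * |Real.cos ((j+1:ℝ)*θ)|)
        ≤ 1 * (|infKernelCoeff ε (j+1)| * 1) := by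
          apply mul_le_mul hw01 ?_ (by positivity) (by norm_num)
          exact mul_le_mul_of_nonneg_left (Real.abs_cos_le_one _) (abs_nonneg _)
    _ = |infKernelCoeff ε (j+1)| := by ring
  have h2 := tendsto_tsum_of_dominated_convergence (coeff_summable ε hε) hpoint hbound
  have h3 := (h2.const_mul (1/Real.pi)).const_add (1/(2*Real.pi))
  unfold infKernel
  apply h3.congr'
  filter_upwards with M
  rw [h1 M]

end Stmt13

/-- For `0 < ε < π`, the infinite-order scaled kernel satisfies the bounds
`0 ≤ K̄_ε(θ) ≤ 1/ε` for every real `θ`. -/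
theorem stmt_13 (ε : ℝ) (hε : 0 < ε) (hεπ : ε < Real.pi) (θ : ℝ) :
    0 ≤ infKernel ε θ ∧ infKernel ε θ ≤ 1 / ε := by
  have ht := Stmt13.kernel_tendsto ε hε θ
  constructor
  · exact ge_of_tendsto ht (Filter.Eventually.of_forall
      fun M => (Stmt13.SM_bounds ε hε hεπ M θ).1)
  · exact le_of_tendsto ht (Filter.Eventually.of_forall
      fun M => (Stmt13.SM_bounds ε hε hεπ M θ).2)
end
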